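/- The fidelity of any biseparable n-qubit state ρ with a graph state |G⟩ of a connected graph G on n ≥ 2 vertices satisfies ⟨G|ρ|G⟩ ≤ 1/2; consequently W(G) = (1/2)I − |G⟩⟨G| has nonnegative expectation on all biseparable states. -/

import Mathlib

open scoped Classical
open Matrix

noncomputable section

namespace GraphStates

variable {V : Type} [Fintype V] [DecidableEq V]

/-- Matrices acting on the `|V|`-qubit Hilbert space `(ℂ²)^{⊗V}`,
indexed by computational basis states `V → Bool`. -/
abbrev QMat (V : Type) := Matrix (V → Bool) (V → Bool) ℂ

/-- Pauli `Z` on qubit `i`. -/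
def pauliZ (i : V) : QMat V :=
  Matrix.diagonal fun f => if f i then -1 else 1

/-- Pauli `X` on qubit `i`. -/
def pauliX (i : V) : QMat V :=
  Matrix.of fun f g => if f = Function.update g i (!g i) then 1 else 0

/-- Product of Pauli `Z` over a set `s` of qubits. -/
def zOn (s : Finset V) : QMat V :=
  Matrix.diagonal fun f => (-1 : ℂ) ^ (s.filter fun v => f v = true).card

/-- Controlled-`Z` gate on qubits `i`, `j`. -/
def czMat (i j : V) : QMat V :=
  Matrix.diagonal fun f => if f i = true ∧ f j = true then -1 else 1

/-- The stabilizer generator `S_i = X_i ∏_{j ∈ N_i} Z_j` of the graph state of `G`. -/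
def stab (G : SimpleGraph V) (i : V) : QMat V :=
  pauliX i * zOn (Finset.univ.filter fun j => G.Adj i j)

/-- The state `|+⟩^{⊗ V}`. -/
def plusVec : (V → Bool) → ℂ := fun _ => ((Real.sqrt 2 : ℂ))⁻¹ ^ Fintype.card V

/-- The product of the controlled-`Z` gates over all edges of `G`
(a single diagonal matrix, since `CZ` gates are diagonal and commute). -/
def czProd (G : SimpleGraph V) : QMat V :=
  Matrix.diagonal fun f =>
    (-1 : ℂ) ^ ((Finset.univ : Finset (Sym2 V)).filter fun e =>
        e ∈ G.edgeSet ∧ ∀ v ∈ e, f v = true).card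

/-- The graph state `|G⟩ = ∏_{(i,j) ∈ E} CZ^{(i,j)} |+⟩^{⊗n}` as a vector. -/
def graphStateVec (G : SimpleGraph V) : (V → Bool) → ℂ :=
  czProd G *ᵥ plusVec

/-- Outer product `|v⟩⟨v|`. -/
def outer {ι : Type} (v : ι → ℂ) : Matrix ι ι ℂ :=
  Matrix.of fun f g => v f * (starRingEnd ℂ) (v g)

/-- Product of a family of matrices over a finite set (in a fixed enumeration order). -/
def prodOn (s : Finset V) (f : V → QMat V) : QMat V :=
  (s.toList.map f).prod

/-- The partial stabilizer projector `P(U,G) = ∏_{v ∈ U} (I + S_v)/2`. -/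
def stabProj (G : SimpleGraph V) (s : Finset V) : QMat V :=
  prodOn s fun v => (2 : ℂ)⁻¹ • (1 + stab G v)

/-- Combine assignments on `s` and on its complement into a global assignment. -/
def merge (s : Finset V) (a : {v // v ∈ s} → Bool) (b : {v // v ∉ s} → Bool) : V → Bool :=
  fun v => if h : v ∈ s then a ⟨v, h⟩ else b ⟨v, h⟩

/-- Partial trace onto the qubits in `s` (tracing out the complement). -/
def ptrace (s : Finset V) (ρ : QMat V) :
    Matrix ({v // v ∈ s} → Bool) ({v // v ∈ s} → Bool) ℂ :=
  Matrix.of fun a b => ∑ h : {v // v ∉ s} → Bool, ρ (merge s a h) (merge s b h)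

/-- Embed an operator on the qubits in `s` into the full system, tensoring with
the identity on the remaining qubits: `A ↦ A ⊗ I`. -/
def embedOp (s : Finset V)
    (A : Matrix ({v // v ∈ s} → Bool) ({v // v ∈ s} → Bool) ℂ) : QMat V :=
  Matrix.of fun f g =>
    if ∀ v, v ∉ s → f v = g v then A (fun v => f v.1) (fun v => g v.1) else 0

/-- The subgraph of `G` induced by the vertex subset `s`. -/
def inducedGraph (G : SimpleGraph V) (s : Finset V) : SimpleGraph {v // v ∈ s} :=
  G.comap Subtype.val

/-- The subgraph of `G` induced by the complement of `s`. -/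
def inducedGraphC (G : SimpleGraph V) (s : Finset V) : SimpleGraph {v // v ∉ s} :=
  G.comap Subtype.val

/-- The product `U = ∏_{(i,j) ∈ Ẽ} CZ^{(i,j)}` of controlled-`Z` gates over the set `Ẽ`
of edges of `G` having exactly one endpoint in `s`. -/
def czCut (G : SimpleGraph V) (s : Finset V) : QMat V :=
  Matrix.diagonal fun f =>
    (-1 : ℂ) ^ ((Finset.univ : Finset (Sym2 V)).filter fun e =>
        e ∈ G.edgeSet ∧ (∀ v ∈ e, f v = true) ∧ (∃ v ∈ e, v ∈ s) ∧ (∃ v ∈ e, v ∉ s)).card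

/-- Tensor product of an operator on the qubits in `s` with an operator on the
complementary qubits, as an operator on the full system. -/
def tensorSplit (s : Finset V)
    (A : Matrix ({v // v ∈ s} → Bool) ({v // v ∈ s} → Bool) ℂ)
    (B : Matrix ({v // v ∉ s} → Bool) ({v // v ∉ s} → Bool) ℂ) : QMat V :=
  Matrix.of fun f g =>
    A (fun v => f v.1) (fun v => g v.1) * B (fun v => f v.1) (fun v => g v.1)

/-- `ρ` is a pure state: the outer product of a normalized vector. -/
def IsPure {ι : Type} [Fintype ι] (ρ : Matrix ι ι ℂ) : Prop :=
  ∃ v : ι → ℂ, (∑ x, Complex.normSq (v x)) = 1 ∧ ρ = outer v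

/-- `ρ` is separable with respect to the bipartition `(s, sᶜ)` of the qubits:
a probabilistic mixture of tensor products of pure states of the two subsystems. -/
def SeparableWrt (s : Finset V) (ρ : QMat V) : Prop :=
  ∃ (ι : Type) (_ : Fintype ι) (p : ι → ℝ)
    (a : ι → Matrix ({v // v ∈ s} → Bool) ({v // v ∈ s} → Bool) ℂ)
    (b : ι → Matrix ({v // v ∉ s} → Bool) ({v // v ∉ s} → Bool) ℂ),
    (∀ k, 0 ≤ p k) ∧ (∑ k, p k) = 1 ∧
    (∀ k, IsPure (a k) ∧ IsPure (b k)) ∧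
    ρ = ∑ k, (p k : ℂ) • tensorSplit s (a k) (b k)

/-- `ρ` is biseparable: a convex mixture of states, each separable with respect to
some (nontrivial) bipartition of the qubits. -/
def Biseparable (ρ : QMat V) : Prop :=
  ∃ (ι : Type) (_ : Fintype ι) (q : ι → ℝ) (A : ι → Finset V) (σ : ι → QMat V),
    (∀ k, 0 ≤ q k) ∧ (∑ k, q k) = 1 ∧
    (∀ k, (A k).Nonempty ∧ A k ≠ Finset.univ ∧ SeparableWrt (A k) (σ k)) ∧
    ρ = ∑ k, (q k : ℂ) • σ k

/-- `𝒱` is a partition of the vertex subset `t` into nonempty pairwise disjoint blocks. -/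
def IsPartitionOn (t : Finset V) (𝒱 : Finset (Finset V)) : Prop :=
  (∀ B ∈ 𝒱, B.Nonempty) ∧
  ((𝒱 : Set (Finset V)).Pairwise fun B C => Disjoint B C) ∧
  𝒱.sup id = t

/-- The entanglement witness `W(𝒱,G) = (k − 1/2) I − ∑_{B ∈ 𝒱} P(B,G)`. -/
def witnessW (G : SimpleGraph V) (𝒱 : Finset (Finset V)) : QMat V :=
  ((𝒱.card : ℂ) - 1/2) • 1 - ∑ B ∈ 𝒱, stabProj G B

/-- The white-noise-mixed state `ρ(p) = (1−p) ρ₀ + p I / 2^n`. -/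
def whiteNoise (ρ0 : QMat V) (p : ℝ) : QMat V :=
  ((1 - p : ℝ) : ℂ) • ρ0 + ((p : ℂ) / (2 ^ Fintype.card V)) • 1

/-- The element `∏_i S_i^{x_i}` of the stabilizer group of `|G⟩`. -/
def stabElem (G : SimpleGraph V) (x : V → Bool) : QMat V :=
  prodOn (Finset.univ.filter fun i => x i = true) (stab G)

/-- The stabilizer generator of the induced subgraph `G' = G[s]`, extended by
identity to the full system: `S_i' = X_i ∏_{j ∈ N_i ∩ s} Z_j`. -/
def subStab (G : SimpleGraph V) (s : Finset V) (i : V) : QMat V :=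
  pauliX i * zOn ((Finset.univ.filter fun j => G.Adj i j) ∩ s)




section Aux
open Finset
set_option linter.unusedSectionVars false


def resA (s : Finset V) (f : V → Bool) : {v // v ∈ s} → Bool := fun v => f v.1
def resB (s : Finset V) (f : V → Bool) : {v // v ∉ s} → Bool := fun v => f v.1

@[simp] lemma resA_merge (s : Finset V) (a : {v // v ∈ s} → Bool) (b : {v // v ∉ s} → Bool) :
    resA s (merge s a b) = a := by
  funext v; simp [resA, merge, v.2]

@[simp] lemma resB_merge (s : Finset V) (a : {v // v ∈ s} → Bool) (b : {v // v ∉ s} → Bool) :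
    resB s (merge s a b) = b := by
  funext v; simp [resB, merge, v.2]

@[simp] lemma merge_res (s : Finset V) (f : V → Bool) :
    merge s (resA s f) (resB s f) = f := by
  funext v; by_cases h : v ∈ s <;> simp [merge, resA, resB, h]

def mergeEquiv (s : Finset V) : ({v // v ∈ s} → Bool) × ({v // v ∉ s} → Bool) ≃ (V → Bool) where
  toFun p := merge s p.1 p.2
  invFun f := (resA s f, resB s f)
  left_inv p := by simp
  right_inv f := by simp

lemma sum_split {M : Type*} [AddCommMonoid M] (s : Finset V) (F : (V → Bool) → M) :
    ∑ f : V → Bool, F f = ∑ a : {v // v ∈ s} → Bool, ∑ b : {v // v ∉ s} → Bool, F (merge s a b) := by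
  rw [← Fintype.sum_equiv (mergeEquiv s) (fun p => F (merge s p.1 p.2)) F (fun p => rfl),
    Fintype.sum_prod_type]

/-- number of fully-true edges -/
def qq (G : SimpleGraph V) (f : V → Bool) : ℕ :=
  ((Finset.univ : Finset (Sym2 V)).filter fun e => e ∈ G.edgeSet ∧ ∀ v ∈ e, f v = true).card

lemma graphStateVec_apply (G : SimpleGraph V) (f : V → Bool) :
    graphStateVec G f = (-1 : ℂ) ^ qq G f * ((Real.sqrt 2 : ℂ))⁻¹ ^ Fintype.card V := by
  simp [graphStateVec, czProd, Matrix.mulVec_diagonal, plusVec, qq]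

lemma conj_graphStateVec (G : SimpleGraph V) (f : V → Bool) :
    (starRingEnd ℂ) (graphStateVec G f) = graphStateVec G f := by
  rw [graphStateVec_apply]
  simp [_root_.map_mul, map_pow, Complex.conj_ofReal]

lemma trace_outer_mul_outer {ι : Type} [Fintype ι] (g ψ : ι → ℂ) :
    Matrix.trace (outer g * outer ψ) =
      (Complex.normSq (∑ f, (starRingEnd ℂ) (g f) * ψ f) : ℂ) := by
  have : ∀ z : ℂ, (Complex.normSq z : ℂ) = z * (starRingEnd ℂ) z := by
    intro z; rw [Complex.mul_conj]
  rw [this, map_sum]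
  simp only [Matrix.trace, Matrix.diag, Matrix.mul_apply, outer, Matrix.of_apply, _root_.map_mul,
    Complex.conj_conj]
  rw [Finset.sum_mul_sum]
  rw [Finset.sum_comm]
  congr 1; funext x; congr 1; funext y
  ring

lemma trace_outer {ι : Type} [Fintype ι] (ψ : ι → ℂ) :
    Matrix.trace (outer ψ) = ((∑ f, Complex.normSq (ψ f) : ℝ) : ℂ) := by
  simp [Matrix.trace, Matrix.diag, outer, Complex.mul_conj]


/-- xor of assignments -/
def xorf {ι : Type} (x x' : ι → Bool) : ι → Bool := fun u => xor (x u) (x' u)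

@[simp] lemma xorf_xorf_left {ι : Type} (x z : ι → Bool) : xorf x (xorf x z) = z := by
  funext u; simp [xorf]

@[simp] lemma xorf_xorf_right {ι : Type} (x z : ι → Bool) : xorf (xorf x z) z = x := by
  funext u; simp [xorf]

def edgeSign (f : V → Bool) (e : Sym2 V) : ℂ := if ∀ v ∈ e, f v = true then -1 else 1

def CrossP (s : Finset V) (e : Sym2 V) : Prop := (∃ v ∈ e, v ∈ s) ∧ (∃ v ∈ e, v ∉ s)

def Dcnt (G : SimpleGraph V) (s : Finset V) (z : {v // v ∈ s} → Bool) (v : {v // v ∉ s}) : ℕ :=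
  (univ.filter fun u : {v // v ∈ s} => G.Adj u.1 v.1 ∧ z u = true).card

lemma prod_ite_neg_one {ι : Type} (t : Finset ι) (P : ι → Prop) [DecidablePred P] :
    (∏ e ∈ t, if P e then (-1 : ℂ) else 1) = (-1) ^ (t.filter P).card := by
  rw [Finset.prod_ite, Finset.prod_const, Finset.prod_const, one_pow, mul_one]

lemma edgeSign_pair (f : V → Bool) (a b : V) :
    edgeSign f s(a, b) = if f a = true ∧ f b = true then (-1 : ℂ) else 1 := by
  unfold edgeSign
  congr 1
  simp only [eq_iff_iff]
  constructor
  · intro h; exact ⟨h a (by simp), h b (by simp)⟩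
  · rintro ⟨h1, h2⟩ v hv
    rcases Sym2.mem_iff.mp hv with rfl | rfl <;> assumption

lemma ite_neg_one_sq (p : Prop) [Decidable p] :
    (if p then (-1 : ℂ) else 1) * (if p then (-1 : ℂ) else 1) = 1 := by
  by_cases h : p <;> simp [h]

/-- non-crossing edges give a `y`-independent sign pair product -/
lemma edgeSign_noncross (s : Finset V) (e : Sym2 V) (hnc : ¬ CrossP s e)
    (x x' : {v // v ∈ s} → Bool) (y y' : {v // v ∉ s} → Bool) :
    edgeSign (merge s x y) e * edgeSign (merge s x' y) e
      = edgeSign (merge s x y') e * edgeSign (merge s x' y') e := by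
  induction e using Sym2.ind with
  | _ a b =>
    simp only [edgeSign_pair]
    unfold CrossP at hnc
    push_neg at hnc
    by_cases ha : a ∈ s
    · have hb : b ∈ s := hnc ⟨a, by simp, ha⟩ b (by simp)
      simp [merge, ha, hb]
    · by_cases hb : b ∈ s
      · exact absurd (hnc ⟨b, by simp, hb⟩ a (by simp)) ha
      · simp only [merge, dif_neg ha, dif_neg hb]
        rw [ite_neg_one_sq, ite_neg_one_sq]

lemma edgeSign_cross_pair (G : SimpleGraph V) (s : Finset V)
    (u : {v // v ∈ s}) (v : {v // v ∉ s})
    (x x' : {v // v ∈ s} → Bool) (y : {v // v ∉ s} → Bool) :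
    edgeSign (merge s x y) s(u.1, v.1) * edgeSign (merge s x' y) s(u.1, v.1)
      = if xorf x x' u = true ∧ y v = true then (-1 : ℂ) else 1 := by
  rw [edgeSign_pair, edgeSign_pair]
  have hu : ∀ w : {v // v ∈ s} → Bool, merge s w y u.1 = w u := by
    intro w; simp [merge, u.2]
  have hv : ∀ w : {v // v ∈ s} → Bool, merge s w y v.1 = y v := by
    intro w; simp [merge, v.2]
  rw [hu, hu, hv, hv]
  rcases hx : x u <;> rcases hx' : x' u <;> rcases hy : y v <;> simp [xorf, hx, hx', hy]

lemma cross_prod (G : SimpleGraph V) (s : Finset V)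
    (x x' : {v // v ∈ s} → Bool) (y : {v // v ∉ s} → Bool) :
    ∏ e ∈ G.edgeFinset.filter (CrossP s),
        edgeSign (merge s x y) e * edgeSign (merge s x' y) e
      = ∏ v : {v // v ∉ s},
          (if y v = true then (-1 : ℂ) ^ (Dcnt G s (xorf x x') v) else 1) := by
  set z := xorf x x' with hz
  -- step 1: LHS = product over adjacent (B,A)-pairs
  have step1 : ∏ e ∈ G.edgeFinset.filter (CrossP s),
      edgeSign (merge s x y) e * edgeSign (merge s x' y) e
      = ∏ p ∈ (univ : Finset ({v // v ∉ s} × {v // v ∈ s})).filter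
          (fun p => G.Adj p.2.1 p.1.1),
          (if z p.2 = true ∧ y p.1 = true then (-1 : ℂ) else 1) := by
    refine (Finset.prod_bij (fun p _ => s(p.2.1, p.1.1)) ?_ ?_ ?_ ?_).symm
    · intro p hp
      rw [Finset.mem_filter] at hp
      rw [Finset.mem_filter, SimpleGraph.mem_edgeFinset, SimpleGraph.mem_edgeSet]
      exact ⟨hp.2, ⟨p.2.1, by simp, p.2.2⟩, ⟨p.1.1, by simp, p.1.2⟩⟩
    · intro p hp q hq h
      rcases Sym2.eq_iff.mp h with ⟨h1, h2⟩ | ⟨h1, h2⟩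
      · exact Prod.ext (Subtype.ext h2) (Subtype.ext h1)
      · exact absurd (h1 ▸ p.2.2) q.1.2
    · intro e he
      rw [Finset.mem_filter, SimpleGraph.mem_edgeFinset] at he
      induction e using Sym2.ind with
      | _ a b =>
        obtain ⟨hadj0, ⟨c, hc, hcs⟩, ⟨d, hd, hds⟩⟩ := he
        have hadj : G.Adj a b := by simpa using hadj0
        by_cases ha : a ∈ s
        · have hb : b ∉ s := by
            rcases Sym2.mem_iff.mp hd with rfl | rfl
            · exact absurd ha hds
            · exact hds
          exact ⟨(⟨b, hb⟩, ⟨a, ha⟩), by simpa using hadj, rfl⟩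
        · have hb : b ∈ s := by
            rcases Sym2.mem_iff.mp hc with rfl | rfl
            · exact absurd hcs ha
            · exact hcs
          exact ⟨(⟨a, ha⟩, ⟨b, hb⟩), by simpa using hadj.symm, Sym2.eq_swap⟩
    · intro p hp
      exact (edgeSign_cross_pair G s p.2 p.1 x x' y).symm
  rw [step1]
  -- step 2: pairs product = double product
  rw [Finset.prod_filter]
  rw [Fintype.prod_prod_type]
  -- step 3: per-v identity
  refine Finset.prod_congr rfl fun v _ => ?_
  by_cases hy : y v = true
  · rw [if_pos hy]
    simp only [Dcnt]
    rw [← prod_ite_neg_one univ (fun u : {v // v ∈ s} => G.Adj u.1 v.1 ∧ z u = true)]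
    · refine Finset.prod_congr rfl fun u _ => ?_
      by_cases hadj : G.Adj u.1 v.1
      · simp [hadj, hy]
      · simp [hadj]
  · simp only [if_neg hy]
    refine Finset.prod_eq_one fun u _ => ?_
    by_cases hadj : G.Adj u.1 v.1 <;> simp [hadj, hy]

lemma abs_edgeSign (f : V → Bool) (e : Sym2 V) : ‖edgeSign f e‖ = 1 := by
  unfold edgeSign; split <;> simp

def epsE (G : SimpleGraph V) (f : V → Bool) : ℂ := ∏ e ∈ G.edgeFinset, edgeSign f e

lemma K_sum (G : SimpleGraph V) (s : Finset V) (x x' : {v // v ∈ s} → Bool) :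
    ∃ C : ℂ, ‖C‖ = 1 ∧
    ∑ y : {v // v ∉ s} → Bool, epsE G (merge s x y) * epsE G (merge s x' y)
      = C * ∏ v : {v // v ∉ s}, (1 + (-1 : ℂ) ^ Dcnt G s (xorf x x') v) := by
  set y0 : {v // v ∉ s} → Bool := fun _ => false
  refine ⟨∏ e ∈ G.edgeFinset.filter (fun e => ¬ CrossP s e),
      edgeSign (merge s x y0) e * edgeSign (merge s x' y0) e, ?_, ?_⟩
  · rw [norm_prod]
    refine Finset.prod_eq_one fun e _ => ?_
    rw [norm_mul, abs_edgeSign, abs_edgeSign, mul_one]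
  · have key : ∀ y : {v // v ∉ s} → Bool,
        epsE G (merge s x y) * epsE G (merge s x' y)
        = (∏ e ∈ G.edgeFinset.filter (fun e => ¬ CrossP s e),
            edgeSign (merge s x y0) e * edgeSign (merge s x' y0) e)
          * ∏ v : {v // v ∉ s}, (if y v = true then (-1 : ℂ) ^ Dcnt G s (xorf x x') v else 1) := by
      intro y
      rw [epsE, epsE, ← Finset.prod_mul_distrib,
        ← Finset.prod_filter_mul_prod_filter_not G.edgeFinset (CrossP s), cross_prod, mul_comm]
      congr 1
      exact Finset.prod_congr rfl fun e he =>
        edgeSign_noncross s e (Finset.mem_filter.mp he).2 x x' y y0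
    rw [Finset.sum_congr rfl fun y _ => key y, ← Finset.mul_sum]
    congr 1
    rw [show (univ : Finset ({v // v ∉ s} → Bool))
        = Fintype.piFinset (fun _ => (univ : Finset Bool)) from (Fintype.piFinset_univ).symm,
      ← Finset.prod_univ_sum (fun _ => (univ : Finset Bool))
        (fun v b => if b = true then (-1 : ℂ) ^ Dcnt G s (xorf x x') v else 1)]
    refine Finset.prod_congr rfl fun v _ => ?_
    rw [show (∑ b ∈ (univ : Finset Bool), if b = true then (-1 : ℂ) ^ Dcnt G s (xorf x x') v else 1)
      = ∑ b : Bool, (if b = true then (-1 : ℂ) ^ Dcnt G s (xorf x x') v else 1) from rfl,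
      Fintype.sum_bool]
    simp [add_comm]

lemma abs_K (G : SimpleGraph V) (s : Finset V) (x x' : {v // v ∈ s} → Bool) :
    ‖∑ y : {v // v ∉ s} → Bool, epsE G (merge s x y) * epsE G (merge s x' y)‖
      = if (∀ v : {v // v ∉ s}, Even (Dcnt G s (xorf x x') v))
          then (2 : ℝ) ^ Fintype.card {v // v ∉ s} else 0 := by
  obtain ⟨C, hC, hK⟩ := K_sum G s x x'
  rw [hK, norm_mul, hC, one_mul, norm_prod]
  by_cases h : ∀ v : {v // v ∉ s}, Even (Dcnt G s (xorf x x') v)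
  · rw [if_pos h]
    have h2 : ∀ v : {v // v ∉ s}, ‖1 + (-1 : ℂ) ^ Dcnt G s (xorf x x') v‖ = 2 := by
      intro v; rw [(h v).neg_one_pow]; norm_num
    rw [Finset.prod_congr rfl (fun v _ => h2 v), Finset.prod_const, Finset.card_univ]
  · rw [if_neg h]
    push_neg at h
    obtain ⟨v, hv⟩ := h
    refine Finset.prod_eq_zero (Finset.mem_univ v) ?_
    rw [(Nat.not_even_iff_odd.mp hv).neg_one_pow]
    norm_num

lemma card_even_parity (G : SimpleGraph V) (s : Finset V)
    (u0 : {v // v ∈ s}) (v0 : {v // v ∉ s}) (hadj : G.Adj u0.1 v0.1) :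
    2 * ((univ : Finset ({v // v ∈ s} → Bool)).filter fun z => Even (Dcnt G s z v0)).card
      = 2 ^ Fintype.card {v // v ∈ s} := by
  set N : Finset {v // v ∈ s} := univ.filter (fun u => G.Adj u.1 v0.1) with hN
  have hu0N : u0 ∈ N := by simp [hN, hadj]
  have hD : ∀ z : {v // v ∈ s} → Bool,
      Dcnt G s z v0 = ∑ u ∈ N, (if z u = true then 1 else 0) := by
    intro z
    rw [Dcnt, ← Finset.card_filter, hN, Finset.filter_filter]
  have flip : ∀ z : {v // v ∈ s} → Bool,
      Even (Dcnt G s (Function.update z u0 (!z u0)) v0) ↔ ¬ Even (Dcnt G s z v0) := by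
    intro z
    rw [hD, hD, ← Finset.add_sum_erase _ _ hu0N, ← Finset.add_sum_erase _ _ hu0N]
    have hrest : ∀ u ∈ N.erase u0,
        (if Function.update z u0 (!z u0) u = true then 1 else 0) = (if z u = true then 1 else 0) :=
      fun u hu => by rw [Function.update_of_ne (Finset.ne_of_mem_erase hu)]
    rw [Finset.sum_congr rfl hrest, Function.update_self]
    cases hz : z u0 <;> simp [Nat.even_add_one, Nat.even_add, parity_simps]
  have hcard : ((univ : Finset ({v // v ∈ s} → Bool)).filter fun z => Even (Dcnt G s z v0)).card
      = ((univ : Finset ({v // v ∈ s} → Bool)).filter fun z => ¬ Even (Dcnt G s z v0)).card := by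
    refine Finset.card_bij' (fun z _ => Function.update z u0 (!z u0))
      (fun z _ => Function.update z u0 (!z u0)) ?_ ?_ ?_ ?_
    · intro z hz
      rw [Finset.mem_filter] at hz ⊢
      exact ⟨Finset.mem_univ _, fun h => ((flip z).mp h) hz.2⟩
    · intro z hz
      rw [Finset.mem_filter] at hz ⊢
      exact ⟨Finset.mem_univ _, (flip z).mpr hz.2⟩
    · intro z _
      funext u
      by_cases hu : u = u0
      · subst hu; simp
      · simp [Function.update_of_ne hu]
    · intro z _
      funext u
      by_cases hu : u = u0
      · subst hu; simp
      · simp [Function.update_of_ne hu]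
  have hsplit := Finset.card_filter_add_card_filter_not
    (s := (univ : Finset ({v // v ∈ s} → Bool))) (fun z => Even (Dcnt G s z v0))
  rw [← hcard] at hsplit
  rw [two_mul, hsplit, Finset.card_univ, Fintype.card_fun, Fintype.card_bool]

lemma exists_cut (G : SimpleGraph V) (s : Finset V) (hconn : G.Connected)
    (hs : s.Nonempty) (hns : s ≠ univ) :
    ∃ (u0 : {v // v ∈ s}) (v0 : {v // v ∉ s}), G.Adj u0.1 v0.1 := by
  obtain ⟨a, ha⟩ := hs
  obtain ⟨b, hb⟩ : ∃ b, b ∉ s := by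
    by_contra h; push_neg at h; exact hns (Finset.eq_univ_iff_forall.mpr h)
  have key : ∀ (a b : V), G.Walk a b → a ∈ s → b ∉ s →
      ∃ (u0 : {v // v ∈ s}) (v0 : {v // v ∉ s}), G.Adj u0.1 v0.1 := by
    intro a b w
    induction w with
    | nil => intro h1 h2; exact absurd h1 h2
    | @cons a c b h p ih =>
      intro h1 h2
      by_cases hc : c ∈ s
      · exact ih hc h2
      · exact ⟨⟨a, h1⟩, ⟨c, hc⟩, h⟩
  exact key a b (hconn.preconnected a b).some ha hb

lemma conj_epsE (G : SimpleGraph V) (f : V → Bool) :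
    (starRingEnd ℂ) (epsE G f) = epsE G f := by
  rw [epsE, map_prod]
  refine Finset.prod_congr rfl fun e _ => ?_
  unfold edgeSign; split <;> simp

def xorEquivL {s : Finset V} (x : {v // v ∈ s} → Bool) : ({v // v ∈ s} → Bool) ≃ ({v // v ∈ s} → Bool) :=
  ⟨fun z => xorf x z, fun z => xorf x z, fun z => by simp, fun z => by simp⟩

def xorEquivR {s : Finset V} (z : {v // v ∈ s} → Bool) : ({v // v ∈ s} → Bool) ≃ ({v // v ∈ s} → Bool) :=
  ⟨fun x => xorf x z, fun x => xorf x z, fun x => by simp, fun x => by simp⟩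

lemma keybound (G : SimpleGraph V) (s : Finset V) (hconn : G.Connected)
    (hs : s.Nonempty) (hns : s ≠ univ)
    (α : ({v // v ∈ s} → Bool) → ℂ) (hα : ∑ x, Complex.normSq (α x) = 1) :
    ∑ y : {v // v ∉ s} → Bool,
        Complex.normSq (∑ x : {v // v ∈ s} → Bool, epsE G (merge s x y) * α x)
      ≤ (2 : ℝ) ^ Fintype.card {v // v ∉ s} * (2 : ℝ) ^ Fintype.card {v // v ∈ s} / 2 := by
  obtain ⟨u0, v0, hadj⟩ := exists_cut G s hconn hs hns
  set F : ({v // v ∉ s} → Bool) → ℂ :=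
    fun y => ∑ x : {v // v ∈ s} → Bool, epsE G (merge s x y) * α x with hF
  set B : ℝ := (2 : ℝ) ^ Fintype.card {v // v ∉ s} with hB
  -- Step A: sum of normSq as Complex.abs
  have stepA : ∑ y, Complex.normSq (F y)
      = ‖∑ y, F y * (starRingEnd ℂ) (F y)‖ := by
    have h1 : (∑ y, F y * (starRingEnd ℂ) (F y))
        = (((∑ y, Complex.normSq (F y) : ℝ)) : ℂ) := by
      rw [Complex.ofReal_sum]
      exact Finset.sum_congr rfl fun y _ => Complex.mul_conj (F y)
    rw [h1, Complex.norm_real, Real.norm_eq_abs, abs_of_nonneg]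
    exact Finset.sum_nonneg fun y _ => Complex.normSq_nonneg _
  -- Step B: expand
  have stepB : (∑ y, F y * (starRingEnd ℂ) (F y))
      = ∑ x, ∑ x', (α x * (starRingEnd ℂ) (α x'))
          * ∑ y, epsE G (merge s x y) * epsE G (merge s x' y) := by
    have hFF : ∀ y, F y * (starRingEnd ℂ) (F y)
        = ∑ x, ∑ x', (α x * (starRingEnd ℂ) (α x'))
            * (epsE G (merge s x y) * epsE G (merge s x' y)) := by
      intro y
      rw [hF, map_sum, Finset.sum_mul_sum]
      refine Finset.sum_congr rfl fun x _ => Finset.sum_congr rfl fun x' _ => ?_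
      rw [_root_.map_mul, conj_epsE]
      ring
    rw [Finset.sum_congr rfl fun y _ => hFF y]
    rw [Finset.sum_comm]
    refine Finset.sum_congr rfl fun x _ => ?_
    rw [Finset.sum_comm]
    refine Finset.sum_congr rfl fun x' _ => ?_
    rw [← Finset.mul_sum]
  -- Step C+D: abs bound with abs_K
  have stepC : ‖∑ y, F y * (starRingEnd ℂ) (F y)‖
      ≤ ∑ x, ∑ x', ‖α x‖ * ‖α x'‖
          * (if (∀ v : {v // v ∉ s}, Even (Dcnt G s (xorf x x') v)) then B else 0) := by
    rw [stepB]
    refine (norm_sum_le _ _).trans ?_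
    refine Finset.sum_le_sum fun x _ => ?_
    refine (norm_sum_le _ _).trans ?_
    refine Finset.sum_le_sum fun x' _ => ?_
    rw [norm_mul, norm_mul, Complex.norm_conj, abs_K, hB]
  -- Step E: reindex and bound
  have stepE : (∑ x, ∑ x', ‖α x‖ * ‖α x'‖
          * (if (∀ v : {v // v ∉ s}, Even (Dcnt G s (xorf x x') v)) then B else 0))
      ≤ B * (2 : ℝ) ^ Fintype.card {v // v ∈ s} / 2 := by
    have hre : ∀ x, (∑ x', ‖α x‖ * ‖α x'‖
          * (if (∀ v : {v // v ∉ s}, Even (Dcnt G s (xorf x x') v)) then B else 0))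
        = ∑ z, ‖α x‖ * ‖α (xorf x z)‖
          * (if (∀ v : {v // v ∉ s}, Even (Dcnt G s z v)) then B else 0) := by
      intro x
      refine (Fintype.sum_equiv (xorEquivL x) _ _ fun z => ?_).symm
      simp only [xorEquivL, Equiv.coe_fn_mk, xorf_xorf_left]
    rw [Finset.sum_congr rfl fun x _ => hre x, Finset.sum_comm]
    have inner : ∀ z : {v // v ∈ s} → Bool,
        ∑ x, ‖α x‖ * ‖α (xorf x z)‖ ≤ 1 := by
      intro z
      have h1 : ∀ x, ‖α x‖ * ‖α (xorf x z)‖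
          ≤ (Complex.normSq (α x) + Complex.normSq (α (xorf x z))) / 2 := by
        intro x
        rw [← Complex.sq_norm, ← Complex.sq_norm]
        nlinarith [sq_nonneg (‖α x‖ - ‖α (xorf x z)‖),
          norm_nonneg (α x),
          norm_nonneg (α (xorf x z))]
      refine (Finset.sum_le_sum fun x _ => h1 x).trans ?_
      have h2 : ∑ x, Complex.normSq (α (xorf x z)) = 1 := by
        rw [← hα]
        exact Fintype.sum_equiv (xorEquivR z) _ _ fun x => rfl
      rw [← Finset.sum_div, Finset.sum_add_distrib, hα, h2]
      norm_num
    have hBnn : (0:ℝ) ≤ B := by rw [hB]; positivity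
    have step1 : ∑ z : {v // v ∈ s} → Bool,
        (∑ x, ‖α x‖ * ‖α (xorf x z)‖
          * (if (∀ v : {v // v ∉ s}, Even (Dcnt G s z v)) then B else 0))
        ≤ ∑ z : {v // v ∈ s} → Bool,
            (if Even (Dcnt G s z v0) then B else 0) := by
      refine Finset.sum_le_sum fun z _ => ?_
      rw [← Finset.sum_mul]
      by_cases hc : ∀ v : {v // v ∉ s}, Even (Dcnt G s z v)
      · rw [if_pos hc, if_pos (hc v0)]
        calc (∑ x, ‖α x‖ * ‖α (xorf x z)‖) * B
            ≤ 1 * B := by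
              refine mul_le_mul_of_nonneg_right (inner z) hBnn
          _ = B := one_mul B
      · rw [if_neg hc, mul_zero]
        split <;> [exact hBnn; exact le_refl 0]
    refine step1.trans ?_
    rw [Finset.sum_ite, Finset.sum_const, Finset.sum_const_zero, add_zero, nsmul_eq_mul]
    have hcard := card_even_parity G s u0 v0 hadj
    have : ((univ.filter fun z : {v // v ∈ s} → Bool => Even (Dcnt G s z v0)).card : ℝ)
        = (2 : ℝ) ^ Fintype.card {v // v ∈ s} / 2 := by
      have := congrArg (fun n : ℕ => (n : ℝ)) hcard
      push_cast at this
      linarith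
    rw [this]
    exact le_of_eq (by ring)
  calc ∑ y, Complex.normSq (F y) = _ := stepA
    _ ≤ _ := stepC
    _ ≤ B * (2 : ℝ) ^ Fintype.card {v // v ∈ s} / 2 := stepE
    _ = (2 : ℝ) ^ Fintype.card {v // v ∉ s} * (2 : ℝ) ^ Fintype.card {v // v ∈ s} / 2 := by
        rw [hB]

end Aux


section Aux2
open Finset
set_option linter.unusedSectionVars false

variable {V : Type} [Fintype V] [DecidableEq V]

lemma epsE_eq (G : SimpleGraph V) (f : V → Bool) :
    ((-1 : ℂ)) ^ qq G f = epsE G f := by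
  rw [epsE]
  have hfe : (Finset.univ : Finset (Sym2 V)).filter
      (fun e => e ∈ G.edgeSet ∧ ∀ v ∈ e, f v = true)
      = G.edgeFinset.filter (fun e => ∀ v ∈ e, f v = true) := by
    ext e
    simp [SimpleGraph.mem_edgeFinset]
  rw [qq, hfe, ← prod_ite_neg_one]
  rfl

lemma graphStateVec_eq (G : SimpleGraph V) (f : V → Bool) :
    graphStateVec G f = epsE G f * ((Real.sqrt 2 : ℂ))⁻¹ ^ Fintype.card V := by
  rw [graphStateVec_apply, epsE_eq]

lemma normSq_sum_mul_le {ι : Type} [Fintype ι] (b u : ι → ℂ) :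
    Complex.normSq (∑ i, b i * u i)
      ≤ (∑ i, Complex.normSq (b i)) * (∑ i, Complex.normSq (u i)) := by
  have h1 : ‖∑ i, b i * u i‖ ≤ ∑ i, ‖b i‖ * ‖u i‖ := by
    refine (norm_sum_le _ _).trans (le_of_eq ?_)
    exact Finset.sum_congr rfl fun i _ => by rw [norm_mul]
  have h2 := Finset.sum_mul_sq_le_sq_mul_sq Finset.univ
    (fun i => ‖b i‖) (fun i => ‖u i‖)
  rw [← Complex.sq_norm]
  calc ‖∑ i, b i * u i‖ ^ 2
      ≤ (∑ i, ‖b i‖ * ‖u i‖) ^ 2 := by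
        refine pow_le_pow_left₀ (norm_nonneg _) h1 2
    _ ≤ (∑ i, ‖b i‖ ^ 2) * (∑ i, ‖u i‖ ^ 2) := h2
    _ = (∑ i, Complex.normSq (b i)) * (∑ i, Complex.normSq (u i)) := by
        rw [Finset.sum_congr rfl fun i _ => Complex.sq_norm (b i),
          Finset.sum_congr rfl fun i _ => Complex.sq_norm (u i)]

lemma card_AB (s : Finset V) :
    Fintype.card {v // v ∈ s} + Fintype.card {v // v ∉ s} = Fintype.card V := by
  rw [← Fintype.card_sum]
  exact Fintype.card_congr (Equiv.sumCompl _)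

lemma normSq_t : Complex.normSq (((Real.sqrt 2 : ℂ))⁻¹ ^ Fintype.card V)
    = ((2 : ℝ))⁻¹ ^ Fintype.card V := by
  rw [map_pow, Complex.normSq_inv]
  congr 1
  rw [Complex.normSq_ofReal, Real.mul_self_sqrt (by norm_num)]

/-- the core bound for pure product states -/
lemma pure_fidelity_le_half (G : SimpleGraph V) (hconn : G.Connected)
    (s : Finset V) (hs : s.Nonempty) (hns : s ≠ Finset.univ)
    (α : ({v // v ∈ s} → Bool) → ℂ) (β : ({v // v ∉ s} → Bool) → ℂ)
    (hα : ∑ x, Complex.normSq (α x) = 1) (hβ : ∑ y, Complex.normSq (β y) = 1) :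
    Complex.normSq (∑ f, (starRingEnd ℂ) (graphStateVec G f)
        * (α (resA s f) * β (resB s f))) ≤ 1 / 2 := by
  set t : ℂ := ((Real.sqrt 2 : ℂ))⁻¹ ^ Fintype.card V with ht
  have hrw : (∑ f, (starRingEnd ℂ) (graphStateVec G f) * (α (resA s f) * β (resB s f)))
      = ∑ y : {v // v ∉ s} → Bool, (t * β y)
          * (∑ x : {v // v ∈ s} → Bool, epsE G (merge s x y) * α x) := by
    rw [sum_split s]
    rw [Finset.sum_comm]
    refine Finset.sum_congr rfl fun y _ => ?_
    rw [Finset.mul_sum]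
    refine Finset.sum_congr rfl fun x _ => ?_
    rw [conj_graphStateVec, graphStateVec_eq, resA_merge, resB_merge, ← ht]
    ring
  rw [hrw]
  refine (normSq_sum_mul_le _ _).trans ?_
  have h1 : ∑ y : {v // v ∉ s} → Bool, Complex.normSq (t * β y)
      = Complex.normSq t := by
    rw [Finset.sum_congr rfl fun y _ => Complex.normSq_mul t (β y), ← Finset.mul_sum, hβ,
      mul_one]
  rw [h1]
  have h2 := keybound G s hconn hs hns α hα
  have htn : Complex.normSq t = ((2:ℝ))⁻¹ ^ Fintype.card V := normSq_t
  have htpos : 0 ≤ Complex.normSq t := Complex.normSq_nonneg t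
  calc Complex.normSq t * ∑ y : {v // v ∉ s} → Bool,
          Complex.normSq (∑ x, epsE G (merge s x y) * α x)
      ≤ Complex.normSq t
          * ((2:ℝ) ^ Fintype.card {v // v ∉ s} * (2:ℝ) ^ Fintype.card {v // v ∈ s} / 2) :=
        mul_le_mul_of_nonneg_left h2 htpos
    _ = 1 / 2 := by
        rw [htn]
        rw [show (2:ℝ) ^ Fintype.card {v // v ∉ s} * (2:ℝ) ^ Fintype.card {v // v ∈ s}
            = (2:ℝ) ^ Fintype.card V by
          rw [← pow_add, add_comm, card_AB s]]
        rw [inv_pow]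
        field_simp

lemma tensorSplit_outer (s : Finset V)
    (α : ({v // v ∈ s} → Bool) → ℂ) (β : ({v // v ∉ s} → Bool) → ℂ) :
    tensorSplit s (outer α) (outer β)
      = outer (fun f => α (resA s f) * β (resB s f)) := by
  ext f g
  simp only [tensorSplit, outer, Matrix.of_apply, _root_.map_mul]
  show _ = α (resA s f) * β (resB s f) * ((starRingEnd ℂ) (α (resA s g)) * (starRingEnd ℂ) (β (resB s g)))
  have e1 : α (resA s f) = α fun v => f v.1 := rfl
  have e2 : β (resB s f) = β fun v => f v.1 := rfl
  have e3 : α (resA s g) = α fun v => g v.1 := rfl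
  have e4 : β (resB s g) = β fun v => g v.1 := rfl
  rw [e1, e2, e3, e4]
  ring

end Aux2


section Aux3
open Finset
set_option linter.unusedSectionVars false

variable {V : Type} [Fintype V] [DecidableEq V]

lemma sum_normSq_prod (s : Finset V)
    (α : ({v // v ∈ s} → Bool) → ℂ) (β : ({v // v ∉ s} → Bool) → ℂ) :
    ∑ f : V → Bool, Complex.normSq (α (resA s f) * β (resB s f))
      = (∑ x, Complex.normSq (α x)) * (∑ y, Complex.normSq (β y)) := by
  rw [sum_split s, Finset.sum_mul_sum]
  refine Finset.sum_congr rfl fun x _ => Finset.sum_congr rfl fun y _ => ?_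
  rw [resA_merge, resB_merge, Complex.normSq_mul]

lemma sep_bound (G : SimpleGraph V) (hconn : G.Connected) (s : Finset V)
    (hs : s.Nonempty) (hns : s ≠ Finset.univ) (ρ : QMat V) (hsep : SeparableWrt s ρ) :
    (Matrix.trace (outer (graphStateVec G) * ρ)).re ≤ 1 / 2
      ∧ Matrix.trace ρ = 1 := by
  obtain ⟨ι, hι, p, a, b, hp, hp1, hpure, hρ⟩ := hsep
  choose αv hα ha using fun k => (hpure k).1
  choose βv hβ hb using fun k => (hpure k).2
  have hterm : ∀ k, Matrix.trace (outer (graphStateVec G) * tensorSplit s (a k) (b k))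
      = (Complex.normSq (∑ f, (starRingEnd ℂ) (graphStateVec G f)
          * (αv k (resA s f) * βv k (resB s f))) : ℂ) := by
    intro k
    rw [ha k, hb k, tensorSplit_outer, trace_outer_mul_outer]
  have htermtr : ∀ k, Matrix.trace (tensorSplit s (a k) (b k)) = 1 := by
    intro k
    rw [ha k, hb k, tensorSplit_outer, trace_outer, sum_normSq_prod, hα k, hβ k]
    norm_num
  constructor
  · rw [hρ, Matrix.mul_sum, Matrix.trace_sum]
    have : ∀ k ∈ (univ : Finset ι), Matrix.trace (outer (graphStateVec G)
          * ((p k : ℂ) • tensorSplit s (a k) (b k)))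
        = (p k : ℂ) * (Complex.normSq (∑ f, (starRingEnd ℂ) (graphStateVec G f)
          * (αv k (resA s f) * βv k (resB s f))) : ℂ) := by
      intro k _
      rw [Matrix.mul_smul, Matrix.trace_smul, smul_eq_mul, hterm k]
    rw [Finset.sum_congr rfl this, Complex.re_sum]
    have hre : ∀ k ∈ (univ : Finset ι), ((p k : ℂ) * (Complex.normSq (∑ f, (starRingEnd ℂ)
          (graphStateVec G f) * (αv k (resA s f) * βv k (resB s f))) : ℂ)).re
        = p k * Complex.normSq (∑ f, (starRingEnd ℂ) (graphStateVec G f)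
          * (αv k (resA s f) * βv k (resB s f))) := by
      intro k _
      rw [← Complex.ofReal_mul, Complex.ofReal_re]
    rw [Finset.sum_congr rfl hre]
    calc ∑ k, p k * Complex.normSq (∑ f, (starRingEnd ℂ) (graphStateVec G f)
          * (αv k (resA s f) * βv k (resB s f)))
        ≤ ∑ k, p k * (1 / 2) := by
          refine Finset.sum_le_sum fun k _ => ?_
          exact mul_le_mul_of_nonneg_left
            (pure_fidelity_le_half G hconn s hs hns (αv k) (βv k) (hα k) (hβ k)) (hp k)
      _ = 1 / 2 := by rw [← Finset.sum_mul, hp1, one_mul]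
  · rw [hρ, Matrix.trace_sum]
    have : ∀ k ∈ (univ : Finset ι), Matrix.trace ((p k : ℂ) • tensorSplit s (a k) (b k))
        = (p k : ℂ) := by
      intro k _
      rw [Matrix.trace_smul, smul_eq_mul, htermtr k, mul_one]
    rw [Finset.sum_congr rfl this, ← Complex.ofReal_sum, hp1, Complex.ofReal_one]

end Aux3

/-- for a connected graph `G` on `n ≥ 2` vertices, any biseparable
state `ρ` has fidelity at most `1/2` with the graph state `|G⟩`; consequently the
witness `W(G) = (1/2)I − |G⟩⟨G|` has nonnegative expectation on `ρ`. -/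
theorem biseparable_fidelity_le_half (G : SimpleGraph V) (hconn : G.Connected)
    (hcard : 2 ≤ Fintype.card V) (ρ : QMat V) (hbisep : Biseparable ρ) :
    (Matrix.trace (outer (graphStateVec G) * ρ)).re ≤ 1 / 2 ∧
    0 ≤ (Matrix.trace (((1 / 2 : ℂ) • 1 - outer (graphStateVec G)) * ρ)).re := by
  obtain ⟨ι, hι, q, A, σ, hq, hq1, hsepA, hρ⟩ := hbisep
  have hk : ∀ k, (Matrix.trace (outer (graphStateVec G) * σ k)).re ≤ 1 / 2
      ∧ Matrix.trace (σ k) = 1 :=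
    fun k => sep_bound G hconn (A k) (hsepA k).1 (hsepA k).2.1 (σ k) (hsepA k).2.2
  have hfid : (Matrix.trace (outer (graphStateVec G) * ρ)).re ≤ 1 / 2 := by
    rw [hρ, Matrix.mul_sum, Matrix.trace_sum]
    have : ∀ k ∈ (Finset.univ : Finset ι),
        Matrix.trace (outer (graphStateVec G) * ((q k : ℂ) • σ k))
          = (q k : ℂ) * Matrix.trace (outer (graphStateVec G) * σ k) := by
      intro k _
      rw [Matrix.mul_smul, Matrix.trace_smul, smul_eq_mul]
    rw [Finset.sum_congr rfl this, Complex.re_sum]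
    calc ∑ k, ((q k : ℂ) * Matrix.trace (outer (graphStateVec G) * σ k)).re
        = ∑ k, q k * (Matrix.trace (outer (graphStateVec G) * σ k)).re := by
          refine Finset.sum_congr rfl fun k _ => ?_
          rw [Complex.mul_re, Complex.ofReal_re, Complex.ofReal_im, zero_mul, sub_zero]
      _ ≤ ∑ k, q k * (1 / 2) := by
          refine Finset.sum_le_sum fun k _ => ?_
          exact mul_le_mul_of_nonneg_left (hk k).1 (hq k)
      _ = 1 / 2 := by rw [← Finset.sum_mul, hq1, one_mul]
  have htr : Matrix.trace ρ = 1 := by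
    rw [hρ, Matrix.trace_sum]
    have : ∀ k ∈ (Finset.univ : Finset ι), Matrix.trace ((q k : ℂ) • σ k) = (q k : ℂ) := by
      intro k _
      rw [Matrix.trace_smul, smul_eq_mul, (hk k).2, mul_one]
    rw [Finset.sum_congr rfl this, ← Complex.ofReal_sum, hq1, Complex.ofReal_one]
  refine ⟨hfid, ?_⟩
  rw [Matrix.sub_mul, Matrix.smul_mul, Matrix.one_mul, Matrix.trace_sub, Matrix.trace_smul,
    htr, smul_eq_mul, mul_one, Complex.sub_re]
  have : ((1 / 2 : ℂ)).re = 1 / 2 := by norm_num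
  rw [this]
  linarith

end GraphStates
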